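/- Let (X, ‖·‖) be a Banach space and let T : X → X be a (k, a)-enriched Kannan mapping, i.e., there exist constants k ∈ [0, ∞) and a ∈ [0, 1/2) such that ‖k(x−y) + Tx − Ty‖ ≤ a·(‖x − Tx‖ + ‖y − Ty‖) for all x, y ∈ X. Then T has exactly one fixed point, i.e., Fix(T) = {p} for some p ∈ X. -/

import Mathlib

/-- Kannan's fixed point theorem: any Kannan mapping on a complete normed
group has a unique fixed point. -/
lemma kannan_existsUnique_fixedPoint
    {X : Type*} [NormedAddCommGroup X] [CompleteSpace X]
    (S : X → X) (a : ℝ) (ha0 : 0 ≤ a) (ha : a < 1 / 2)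
    (hS : ∀ x y : X, ‖S x - S y‖ ≤ a * (‖x - S x‖ + ‖y - S y‖)) :
    ∃! p : X, S p = p := by
  set c : ℝ := a / (1 - a) with hc
  have h1a : 0 < 1 - a := by linarith
  have hc0 : 0 ≤ c := div_nonneg ha0 h1a.le
  have hc1 : c < 1 := by
    rw [div_lt_one h1a]; linarith
  have key : ∀ x : X, ‖S x - S (S x)‖ ≤ c * ‖x - S x‖ := by
    intro x
    have h := hS x (S x)
    rw [hc, div_mul_eq_mul_div, le_div_iff₀ h1a]
    nlinarith [norm_nonneg (S x - S (S x)), norm_nonneg (x - S x)]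
  set u : ℕ → X := fun n => S^[n] 0 with hu
  have hus : ∀ n, u (n + 1) = S (u n) := by
    intro n; simp [hu, Function.iterate_succ_apply']
  set C : ℝ := ‖(0 : X) - S 0‖ with hC
  have hgeo : ∀ n, dist (u n) (u (n + 1)) ≤ C * c ^ n := by
    intro n
    induction n with
    | zero => simp [dist_eq_norm, hus 0, hu, hC]
    | succ n ih =>
      rw [hus (n + 1), hus n, dist_eq_norm]
      calc ‖S (u n) - S (S (u n))‖ ≤ c * ‖u n - S (u n)‖ := key (u n)
        _ = c * dist (u n) (u (n + 1)) := by rw [dist_eq_norm, hus n]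
        _ ≤ c * (C * c ^ n) := by
            exact mul_le_mul_of_nonneg_left ih hc0
        _ = C * c ^ (n + 1) := by ring
  have hcauchy : CauchySeq u := cauchySeq_of_le_geometric c C hc1 hgeo
  obtain ⟨p, hp⟩ := cauchySeq_tendsto_of_complete hcauchy
  -- dist (u n) (u (n+1)) → 0
  have hd0 : Filter.Tendsto (fun n => dist (u n) (u (n + 1))) Filter.atTop (nhds 0) := by
    apply squeeze_zero (fun n => dist_nonneg) hgeo
    have := tendsto_pow_atTop_nhds_zero_of_lt_one hc0 hc1
    simpa using this.const_mul C
  have hp1 : Filter.Tendsto (fun n => u (n + 1)) Filter.atTop (nhds p) :=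
    hp.comp (Filter.tendsto_add_atTop_nat 1)
  have hfix : S p = p := by
    have hineq : ∀ n, dist (u (n + 1)) (S p) ≤ a * (dist (u n) (u (n + 1)) + dist p (S p)) := by
      intro n
      rw [hus n, dist_eq_norm, dist_eq_norm, dist_eq_norm]
      exact hS (u n) p
    have hL : Filter.Tendsto (fun n => dist (u (n + 1)) (S p)) Filter.atTop
        (nhds (dist p (S p))) := (Continuous.dist continuous_id continuous_const).continuousAt.tendsto.comp hp1
    have hR : Filter.Tendsto (fun n => a * (dist (u n) (u (n + 1)) + dist p (S p)))
        Filter.atTop (nhds (a * (0 + dist p (S p)))) :=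
      ((hd0.add tendsto_const_nhds).const_mul a)
    have hle : dist p (S p) ≤ a * (0 + dist p (S p)) :=
      le_of_tendsto_of_tendsto' hL hR hineq
    have : dist p (S p) = 0 := by
      nlinarith [dist_nonneg (x := p) (y := S p)]
    rw [dist_eq_zero] at this
    exact this.symm
  refine ⟨p, hfix, ?_⟩
  intro q hq
  have h := hS q p
  rw [hq, hfix] at h
  simp only [sub_self, norm_zero, add_zero, mul_zero] at h
  exact sub_eq_zero.mp (norm_le_zero_iff.mp h)

/-- Any `(k, a)`-enriched Kannan mapping on a Banach space has exactly one fixed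
point, i.e. `Fix(T) = {p}` for some `p`. -/
theorem enrichedKannan_fixedPointSet_singleton
    {X : Type*} [NormedAddCommGroup X] [NormedSpace ℝ X] [CompleteSpace X]
    (T : X → X) (k a : ℝ) (hk : 0 ≤ k) (ha0 : 0 ≤ a) (ha : a < 1 / 2)
    (hT : ∀ x y : X, ‖k • (x - y) + (T x - T y)‖ ≤ a * (‖x - T x‖ + ‖y - T y‖)) :
    ∃ p : X, {x : X | T x = x} = {p} := by
  set lam : ℝ := 1 / (k + 1) with hlam
  have hk1 : 0 < k + 1 := by linarith
  have hlam0 : 0 < lam := by positivity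
  set S : X → X := fun x => (1 - lam) • x + lam • T x with hSdef
  have hSsub : ∀ x y : X, S x - S y = lam • (k • (x - y) + (T x - T y)) := by
    intro x y
    have h1 : 1 - lam = lam * k := by
      rw [hlam]; field_simp; ring
    simp only [hSdef, h1, smul_add, smul_smul, mul_comm]
    module
  have hxS : ∀ x : X, x - S x = lam • (x - T x) := by
    intro x
    simp only [hSdef]
    module
  have hS : ∀ x y : X, ‖S x - S y‖ ≤ a * (‖x - S x‖ + ‖y - S y‖) := by
    intro x y
    rw [hSsub, hxS, hxS, norm_smul, norm_smul, norm_smul,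
      Real.norm_eq_abs, abs_of_pos hlam0]
    calc lam * ‖k • (x - y) + (T x - T y)‖ ≤ lam * (a * (‖x - T x‖ + ‖y - T y‖)) :=
          mul_le_mul_of_nonneg_left (hT x y) hlam0.le
      _ = a * (lam * ‖x - T x‖ + lam * ‖y - T y‖) := by ring
  obtain ⟨p, hp, huniq⟩ := kannan_existsUnique_fixedPoint S a ha0 ha hS
  have hfixiff : ∀ x : X, T x = x ↔ S x = x := by
    intro x
    constructor
    · intro h; simp [hSdef, h]; module
    · intro h
      have : x - S x = 0 := by rw [h, sub_self]
      rw [hxS] at this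
      have h2 : x - T x = 0 := by
        rcases smul_eq_zero.mp this with h | h
        · exact absurd h hlam0.ne'
        · exact h
      have := sub_eq_zero.mp h2
      exact this.symm
  refine ⟨p, ?_⟩
  ext x
  simp only [Set.mem_setOf_eq, Set.mem_singleton_iff]
  constructor
  · intro h; exact huniq x ((hfixiff x).mp h)
  · intro h; rw [h]; exact (hfixiff p).mpr hp
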